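/- (Quasi-differenced long autocovariance with an ARMA(1,q) non-skill component.) In the ARMA setting with k ≥ q, for all integers t, t' with t' ≥ t + k + 1, cov(w_t, w_{t'}) − ρ_{t'} · cov(w_t, w_{t'−1}) = μ_t · (μ_{t'} − ρ_{t'} · μ_{t'−1}) · Var(θ_t). -/

import Mathlib

open MeasureTheory ProbabilityTheory

/-- Covariance of two real-valued random variables under measure `P`. -/
noncomputable def cov {Ω : Type*} [MeasurableSpace Ω] (P : Measure Ω) (X Y : Ω → ℝ) : ℝ :=
  ∫ ω, (X ω - ∫ a, X a ∂P) * (Y ω - ∫ a, Y a ∂P) ∂P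

/-- Variance of a real-valued random variable under measure `P`. -/
noncomputable def Var {Ω : Type*} [MeasurableSpace Ω] (P : Measure Ω) (X : Ω → ℝ) : ℝ :=
  cov P X X

section helpers

set_option linter.unusedSectionVars false

variable {Ω : Type*} [MeasurableSpace Ω] (P : Measure Ω) [IsProbabilityMeasure P]

lemma intg_mul {X Y : Ω → ℝ} (hX : MemLp X 2 P) (hY : MemLp Y 2 P) :
    Integrable (fun ω => X ω * Y ω) P :=
  memLp_one_iff_integrable.mp (hY.smul (r := 1) hX)

lemma intg_centered_mul {X Y : Ω → ℝ} (hX : MemLp X 2 P) (hY : MemLp Y 2 P) :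
    Integrable (fun ω => (X ω - ∫ a, X a ∂P) * (Y ω - ∫ a, Y a ∂P)) P :=
  intg_mul P (hX.sub (memLp_const _)) (hY.sub (memLp_const _))

lemma cov_symm (X Y : Ω → ℝ) : cov P X Y = cov P Y X := by
  unfold cov
  exact integral_congr_ae (Filter.Eventually.of_forall fun ω => by ring)

lemma cov_zero_right (X : Ω → ℝ) : cov P X (fun _ => (0 : ℝ)) = 0 := by
  unfold cov
  simp

lemma cov_smul_left (c : ℝ) (X Z : Ω → ℝ) :
    cov P (fun ω => c * X ω) Z = c * cov P X Z := by
  unfold cov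
  rw [integral_const_mul,
    ← integral_const_mul c fun ω => (X ω - ∫ a, X a ∂P) * (Z ω - ∫ a, Z a ∂P)]
  exact integral_congr_ae (Filter.Eventually.of_forall fun ω => by ring)

lemma cov_smul_right (c : ℝ) (Z X : Ω → ℝ) :
    cov P Z (fun ω => c * X ω) = c * cov P Z X := by
  rw [cov_symm, cov_smul_left, cov_symm P X Z]

lemma cov_add_left {X Y Z : Ω → ℝ} (hX : MemLp X 2 P) (hY : MemLp Y 2 P) (hZ : MemLp Z 2 P) :
    cov P (fun ω => X ω + Y ω) Z = cov P X Z + cov P Y Z := by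
  have hm : (∫ a, (X a + Y a) ∂P) = (∫ a, X a ∂P) + ∫ a, Y a ∂P :=
    integral_add (hX.integrable one_le_two) (hY.integrable one_le_two)
  unfold cov
  rw [hm, ← integral_add (intg_centered_mul P hX hZ) (intg_centered_mul P hY hZ)]
  exact integral_congr_ae (Filter.Eventually.of_forall fun ω => by ring)

lemma cov_add_right {Z X Y : Ω → ℝ} (hZ : MemLp Z 2 P) (hX : MemLp X 2 P)
    (hY : MemLp Y 2 P) :
    cov P Z (fun ω => X ω + Y ω) = cov P Z X + cov P Z Y := by
  rw [cov_symm, cov_add_left P hX hY hZ, cov_symm P X Z, cov_symm P Y Z]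

lemma cov_triple_left {X1 X2 X3 Y : Ω → ℝ} (a : ℝ) (h1 : MemLp X1 2 P) (h2 : MemLp X2 2 P)
    (h3 : MemLp X3 2 P) (hY : MemLp Y 2 P) :
    cov P (fun ω => a * X1 ω + X2 ω + X3 ω) Y
      = a * cov P X1 Y + cov P X2 Y + cov P X3 Y := by
  have e1 : cov P (fun ω => a * X1 ω + X2 ω + X3 ω) Y
      = cov P (fun ω => a * X1 ω + X2 ω) Y + cov P X3 Y :=
    cov_add_left P ((h1.const_mul a).add h2) h3 hY
  have e2 : cov P (fun ω => a * X1 ω + X2 ω) Y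
      = cov P (fun ω => a * X1 ω) Y + cov P X2 Y :=
    cov_add_left P (h1.const_mul a) h2 hY
  rw [e1, e2, cov_smul_left]

lemma cov_triple_right {Y1 Y2 Y3 X : Ω → ℝ} (b : ℝ) (h1 : MemLp Y1 2 P) (h2 : MemLp Y2 2 P)
    (h3 : MemLp Y3 2 P) (hX : MemLp X 2 P) :
    cov P X (fun ω => b * Y1 ω + Y2 ω + Y3 ω)
      = b * cov P X Y1 + cov P X Y2 + cov P X Y3 := by
  rw [cov_symm, cov_triple_left P b h1 h2 h3 hX, cov_symm P Y1 X, cov_symm P Y2 X,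
    cov_symm P Y3 X]

lemma cov_sum_right {X : Ω → ℝ} (hX : MemLp X 2 P) (f : ℕ → Ω → ℝ)
    (hf : ∀ j, MemLp (f j) 2 P) (n : ℕ) :
    cov P X (fun ω => ∑ j ∈ Finset.range n, f j ω)
      = ∑ j ∈ Finset.range n, cov P X (f j) := by
  induction n with
  | zero =>
      simp only [Finset.range_zero, Finset.sum_empty]
      exact cov_zero_right P X
  | succ n ih =>
      have hsplit : (fun ω => ∑ j ∈ Finset.range (n + 1), f j ω)
          = fun ω => (∑ j ∈ Finset.range n, f j ω) + f n ω :=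
        funext fun ω => Finset.sum_range_succ _ _
      have hmem : MemLp (fun ω => ∑ j ∈ Finset.range n, f j ω) 2 P :=
        memLp_finset_sum _ fun j _ => hf j
      rw [hsplit, cov_add_right P hX hmem (hf n), ih, Finset.sum_range_succ]

end helpers

/-- Quasi-differenced long autocovariance with an ARMA(1,q) non-skill component:
for `t' ≥ t + k + 1`,
`cov (w t) (w t') − ρ t' * cov (w t) (w (t'−1)) = μ t * (μ t' − ρ t' * μ (t'−1)) * Var (θ t)`. -/
theorem ARMA_quasi_differenced_autocov
    {Ω : Type*} [MeasurableSpace Ω] (P : Measure Ω) [IsProbabilityMeasure P]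
    (k q : ℕ) (hk : 1 ≤ k) (hqk : q ≤ k) (β : ℕ → ℝ)
    (μ ρ : ℤ → ℝ) (θ φ ν ε : ℤ → Ω → ℝ) (w : ℤ → Ω → ℝ)
    (hθ : ∀ t, MemLp (θ t) 2 P) (hφ : ∀ t, MemLp (φ t) 2 P)
    (hν : ∀ t, MemLp (ν t) 2 P) (hε : ∀ t, MemLp (ε t) 2 P)
    (hw : ∀ t ω, w t ω = μ t * θ t ω + φ t ω + ε t ω)
    (hrec : ∀ t ω, φ t ω = ρ t * φ (t - 1) ω +
      ∑ j ∈ Finset.range (q + 1), β j * ν (t - (j : ℤ)) ω)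
    (hΔθθ : ∀ t t' : ℤ, t' < t →
      cov P (fun ω => θ t ω - θ (t - 1) ω) (θ t') = 0)
    (hθφ : ∀ t t' : ℤ, cov P (θ t) (φ t') = 0)
    (hθν : ∀ t t' : ℤ, cov P (θ t) (ν t') = 0)
    (hθε : ∀ t t' : ℤ, cov P (θ t) (ε t') = 0)
    (hφν : ∀ t t' : ℤ, t' < t → cov P (φ t') (ν t) = 0)
    (hνν : ∀ t t' : ℤ, t' < t → cov P (ν t') (ν t) = 0)
    (hφε : ∀ t t' : ℤ, cov P (φ t) (ε t') = 0)
    (hνε : ∀ t t' : ℤ, cov P (ν t) (ε t') = 0)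
    (hεε : ∀ t t' : ℤ, (k : ℤ) ≤ |t - t'| → cov P (ε t) (ε t') = 0) :
    ∀ t t' : ℤ, t + k + 1 ≤ t' →
      cov P (w t) (w t') - ρ t' * cov P (w t) (w (t' - 1)) =
        μ t * (μ t' - ρ t' * μ (t' - 1)) * Var P (θ t) := by
  intro t t' ht
  -- telescoping for θ
  have hθθn : ∀ n : ℕ, cov P (θ t) (θ (t + n)) = cov P (θ t) (θ t) := by
    intro n
    induction n with
    | zero => simp
    | succ n ih =>
        set s : ℤ := t + n with hsdef
        have hsucc : t + ((n : ℤ) + 1) = s + 1 := by omega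
        rw [show ((n + 1 : ℕ) : ℤ) = (n : ℤ) + 1 from by push_cast; ring, hsucc]
        have hsplit : θ (s + 1) = fun ω => θ s ω + (θ (s + 1) ω - θ s ω) :=
          funext fun ω => by ring
        have hz : cov P (θ t) (fun ω => θ (s + 1) ω - θ s ω) = 0 := by
          rw [cov_symm]
          have h0 := hΔθθ (s + 1) t (by omega)
          simpa [show s + 1 - 1 = s from by ring] using h0
        calc cov P (θ t) (θ (s + 1))
            = cov P (θ t) (fun ω => θ s ω + (θ (s + 1) ω - θ s ω)) := by
              rw [← hsplit]
          _ = cov P (θ t) (θ s) + cov P (θ t) (fun ω => θ (s + 1) ω - θ s ω) :=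
              cov_add_right P (hθ t) (hθ s) ((hθ (s + 1)).sub (hθ s))
          _ = cov P (θ t) (θ t) := by rw [hz, hsdef, ih, add_zero]
  have hθθ : ∀ s : ℤ, t ≤ s → cov P (θ t) (θ s) = cov P (θ t) (θ t) := by
    intro s hs
    have : s = t + ((s - t).toNat : ℤ) := by omega
    rw [this]
    exact hθθn (s - t).toNat
  -- the φ recursion kills the quasi-difference of the φ autocovariance
  have hΦ : ∀ s : ℤ, t + (q : ℤ) < s →
      cov P (φ t) (φ s) = ρ s * cov P (φ t) (φ (s - 1)) := by
    intro s hs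
    have hsplit : φ s = fun ω => ρ s * φ (s - 1) ω +
        ∑ j ∈ Finset.range (q + 1), β j * ν (s - (j : ℤ)) ω := funext (hrec s)
    have hsum : MemLp (fun ω => ∑ j ∈ Finset.range (q + 1), β j * ν (s - (j : ℤ)) ω) 2 P :=
      memLp_finset_sum _ fun j _ => (hν _).const_mul _
    calc cov P (φ t) (φ s)
        = cov P (φ t) (fun ω => ρ s * φ (s - 1) ω +
            ∑ j ∈ Finset.range (q + 1), β j * ν (s - (j : ℤ)) ω) := by rw [← hsplit]
      _ = cov P (φ t) (fun ω => ρ s * φ (s - 1) ω) +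
          cov P (φ t) (fun ω => ∑ j ∈ Finset.range (q + 1), β j * ν (s - (j : ℤ)) ω) :=
          cov_add_right P (hφ t) ((hφ (s - 1)).const_mul _) hsum
      _ = ρ s * cov P (φ t) (φ (s - 1)) + 0 := by
          rw [cov_smul_right]
          congr 1
          rw [cov_sum_right P (hφ t) _ (fun j => (hν _).const_mul _)]
          refine Finset.sum_eq_zero fun j hj => ?_
          have hjq : (j : ℤ) ≤ (q : ℤ) := by
            exact_mod_cast Nat.lt_succ_iff.mp (Finset.mem_range.mp hj)
          rw [cov_smul_right, hφν (s - (j : ℤ)) t (by omega), mul_zero]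
      _ = ρ s * cov P (φ t) (φ (s - 1)) := add_zero _
  -- expansion of cov (w t) (w s)
  have hcov : ∀ s : ℤ, cov P (ε t) (ε s) = 0 →
      cov P (w t) (w s) = μ t * (μ s * cov P (θ t) (θ s)) + cov P (φ t) (φ s) := by
    intro s hεs
    have hwt : w t = fun ω => μ t * θ t ω + φ t ω + ε t ω := funext (hw t)
    have hws : w s = fun ω => μ s * θ s ω + φ s ω + ε s ω := funext (hw s)
    have hwsMem : MemLp (fun ω => μ s * θ s ω + φ s ω + ε s ω) 2 P :=
      (((hθ s).const_mul _).add (hφ s)).add (hε s)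
    rw [hwt, hws,
      cov_triple_left P (μ t) (hθ t) (hφ t) (hε t) hwsMem,
      cov_triple_right P (μ s) (hθ s) (hφ s) (hε s) (hθ t),
      cov_triple_right P (μ s) (hθ s) (hφ s) (hε s) (hφ t),
      cov_triple_right P (μ s) (hθ s) (hφ s) (hε s) (hε t),
      hθφ t s, hθε t s, cov_symm P (φ t) (θ s), hθφ s t, hφε t s,
      cov_symm P (ε t) (θ s), hθε s t, cov_symm P (ε t) (φ s), hφε s t, hεs]
    ring
  -- the ε covariances vanish at lags ≥ k
  have hε1 : cov P (ε t) (ε t') = 0 := by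
    refine hεε t t' ?_
    rw [abs_sub_comm, abs_of_nonneg (by omega)]
    omega
  have hε2 : cov P (ε t) (ε (t' - 1)) = 0 := by
    refine hεε t (t' - 1) ?_
    rw [abs_sub_comm, abs_of_nonneg (by omega)]
    omega
  rw [hcov t' hε1, hcov (t' - 1) hε2, hθθ t' (by omega), hθθ (t' - 1) (by omega),
    hΦ t' (by omega)]
  simp only [Var]
  ring
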